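/- For every finite simple graph G and nonnegative reals λ and α, the generalized independence polynomial satisfies Z_G(λ; α) ≥ ∏_{v ∈ V(G)} ((d_v+1)λα^{d_v} + 1)^{1/(d_v+1)}, where d_v is the degree of v. -/

import Mathlib

open Finset

section Analytic
open Real

lemma poly_amgm (d : ℕ) {x : ℝ} (hx : 1 ≤ x) :
    (d + 1 : ℝ) * x ^ d ≤ d * x ^ (d + 1) + 1 := by
  induction d with
  | zero => simp
  | succ d ih =>
    have hx0 : (0:ℝ) ≤ x := le_trans zero_le_one hx
    have key : 0 ≤ (x - 1) * (x ^ (d+1) - 1) :=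
      mul_nonneg (sub_nonneg.2 hx) (sub_nonneg.2 (one_le_pow₀ hx))
    have h1 : x + x ^ (d+1) ≤ x ^ (d+2) + 1 := by nlinarith [pow_succ x (d+1)]
    have h2 : x * ((d+1:ℝ) * x ^ d) ≤ x * (d * x ^ (d+1) + 1) :=
      mul_le_mul_of_nonneg_left ih hx0
    push_cast
    calc ((d:ℝ)+1+1) * x ^ (d+1) = x * ((d+1:ℝ) * x ^ d) + x ^ (d+1) := by ring
    _ ≤ x * (d * x ^ (d+1) + 1) + x ^ (d+1) := by linarith
    _ = (d:ℝ) * x ^ (d+2) + (x + x ^ (d+1)) := by ring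
    _ ≤ (d:ℝ) * x ^ (d+2) + (x ^ (d+2) + 1) := by linarith
    _ = ((d:ℝ)+1) * x ^ (d+1+1) + 1 := by ring

lemma Td (d : ℕ) (hd : 1 ≤ d) {x : ℝ} (hx : 1 ≤ x) :
    (((d + 1 : ℝ) * x ^ d - 1) / d) ^ ((d + 2 : ℝ) / (d + 1)) ≤
      ((d + 2 : ℝ) * x ^ (d + 1) - 1) / (d + 1) := by
  have hd0 : (d : ℝ) ≠ 0 := by positivity
  have hd1 : (d : ℝ) + 1 ≠ 0 := by positivity
  have he : (1:ℝ) ≤ (d + 2 : ℝ) / (d + 1) := by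
    rw [le_div_iff₀ (by positivity)]; linarith
  set e : ℝ := (d + 2 : ℝ) / (d + 1) with he_def
  set u : ℝ → ℝ := fun x => ((d + 1 : ℝ) * x ^ d - 1) / d with hu_def
  set f : ℝ → ℝ := fun x => ((d + 2 : ℝ) * x ^ (d + 1) - 1) / (d + 1) - (u x) ^ e with hf_def
  have hderiv : ∀ y : ℝ, HasDerivAt f
      ((d + 2 : ℝ) * ((d+1) * y ^ d) / (d+1)
        - (d + 1 : ℝ) * ((d:ℝ) * y ^ (d-1)) / d * e * (u y) ^ (e - 1)) y := by
    intro y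
    have h1 : HasDerivAt (fun y : ℝ => ((d + 2 : ℝ) * y ^ (d+1) - 1) / (d + 1))
        ((d + 2 : ℝ) * ((d+1) * y ^ d) / (d+1)) y := by
      have := (hasDerivAt_pow (d+1) y).const_mul (d + 2 : ℝ)
      simp only [Nat.cast_add, Nat.cast_one, Nat.add_sub_cancel] at this
      exact (this.sub_const 1).div_const _
    have h2 : HasDerivAt u ((d + 1 : ℝ) * ((d:ℝ) * y ^ (d-1)) / d) y := by
      have := (hasDerivAt_pow d y).const_mul (d + 1 : ℝ)
      exact (this.sub_const 1).div_const _
    exact h1.sub (h2.rpow_const (Or.inr he))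
  have hdiff : Differentiable ℝ f := fun y => (hderiv y).differentiableAt
  have hmono : MonotoneOn f (Set.Ici (1:ℝ)) := by
    apply monotoneOn_of_deriv_nonneg (convex_Ici 1) hdiff.continuous.continuousOn
      (hdiff.differentiableOn)
    intro y hy
    rw [interior_Ici] at hy
    have hy1 : (1:ℝ) ≤ y := le_of_lt hy
    have hy0 : (0:ℝ) ≤ y := by linarith
    rw [(hderiv y).deriv]
    have hxd : (1:ℝ) ≤ y ^ d := one_le_pow₀ hy1
    have hu1 : (1:ℝ) ≤ u y := by
      rw [hu_def]; rw [le_div_iff₀ (by positivity)]; nlinarith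
    have hule : u y ≤ y ^ (d+1) := by
      rw [hu_def]; rw [div_le_iff₀ (by positivity)]
      have := poly_amgm d hy1
      linarith
    have hrpow : (u y) ^ (e - 1) ≤ y := by
      have he1 : e - 1 = ((d:ℝ)+1)⁻¹ := by
        rw [he_def]; field_simp; ring
      rw [he1]
      calc (u y) ^ ((d:ℝ)+1)⁻¹ ≤ (y ^ (d+1)) ^ ((d:ℝ)+1)⁻¹ :=
            Real.rpow_le_rpow (by linarith) hule (by positivity)
      _ = y := by
            rw [show ((d:ℝ)+1) = ((d+1 : ℕ) : ℝ) by push_cast; ring]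
            exact Real.pow_rpow_inv_natCast hy0 (by omega)
    have hpow : y ^ (d-1) * y = y ^ d := by
      rw [← pow_succ]; congr 1; omega
    have hupos : (0:ℝ) ≤ (u y) ^ (e-1) := Real.rpow_nonneg (by linarith) _
    have hkey : (d + 1 : ℝ) * ((d:ℝ) * y ^ (d-1)) / d * e * (u y) ^ (e - 1)
        ≤ (d + 2 : ℝ) * ((d+1) * y ^ d) / (d+1) := by
      have hc1 : (d + 1 : ℝ) * ((d:ℝ) * y ^ (d-1)) / d * e = (d+2:ℝ) * y ^ (d-1) := by
        rw [he_def]; field_simp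
      have hc2 : (d + 2 : ℝ) * ((d+1) * y ^ d) / (d+1) = (d+2:ℝ) * y ^ d := by
        field_simp
      rw [hc1, hc2]
      calc (d+2:ℝ) * y ^ (d-1) * (u y) ^ (e-1) ≤ (d+2:ℝ) * y ^ (d-1) * y :=
            mul_le_mul_of_nonneg_left hrpow (by positivity)
      _ = (d+2:ℝ) * y ^ d := by rw [mul_assoc, hpow]
    linarith
  have hf1 : f 1 = 0 := by
    rw [hf_def, hu_def]
    simp only [one_pow, mul_one]
    rw [show ((d+1:ℝ) - 1)/d = 1 by field_simp; ring]
    rw [Real.one_rpow]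
    field_simp
    ring
  have := hmono (Set.mem_Ici.2 le_rfl) (Set.mem_Ici.2 hx) hx
  rw [hf1] at this
  rw [hf_def] at this
  simp only at this
  linarith

lemma chain (m : ℕ) (hm : 1 ≤ m) {t : ℝ} (ht : 0 ≤ t) :
    ∀ d : ℕ, m ≤ d →
      (1 + ((m:ℝ)+1)*t) ^ (((d:ℝ)+1)/((m:ℝ)+1)) ≤
        (((d:ℝ)+1) * (1 + (m:ℝ)*t) ^ ((d:ℝ)/(m:ℝ)) - 1)/(d:ℝ) := by
  have hm0 : ((m:ℝ)) ≠ 0 := by positivity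
  have hm1 : ((m:ℝ)+1) ≠ 0 := by positivity
  have hb : (1:ℝ) ≤ 1 + ((m:ℝ)+1)*t := by nlinarith [(by exact_mod_cast hm : (1:ℝ) ≤ (m:ℝ))]
  have ha : (1:ℝ) ≤ 1 + (m:ℝ)*t := by nlinarith [(by exact_mod_cast hm : (1:ℝ) ≤ (m:ℝ))]
  set x : ℝ := (1 + (m:ℝ)*t) ^ ((m:ℝ))⁻¹ with hx_def
  have hx1 : (1:ℝ) ≤ x := Real.one_le_rpow ha (by positivity)
  have hxpow : ∀ k : ℕ, x ^ k = (1 + (m:ℝ)*t) ^ ((k:ℝ)/(m:ℝ)) := by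
    intro k
    rw [hx_def, ← Real.rpow_natCast ((1 + (m:ℝ)*t) ^ ((m:ℝ))⁻¹) k,
      ← Real.rpow_mul (by linarith)]
    congr 1
    field_simp
  intro d hd
  induction d, hd using Nat.le_induction with
  | base =>
    rw [div_self hm1, Real.rpow_one]
    rw [show ((m:ℝ))/(m:ℝ) = 1 by field_simp, Real.rpow_one]
    rw [le_div_iff₀ (by positivity)]
    ring_nf
    nlinarith
  | succ d hmd ih =>
    have hd1 : (1:ℝ) ≤ (d:ℝ) := by exact_mod_cast le_trans hm hmd
    have hQ : (1 + ((m:ℝ)+1)*t) ^ (((d:ℝ)+1+1)/((m:ℝ)+1)) =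
        ((1 + ((m:ℝ)+1)*t) ^ (((d:ℝ)+1)/((m:ℝ)+1))) ^ (((d:ℝ)+2)/((d:ℝ)+1)) := by
      rw [← Real.rpow_mul (by linarith)]
      congr 1
      field_simp
      ring
    push_cast
    rw [hQ]
    have hQd0 : (0:ℝ) ≤ (1 + ((m:ℝ)+1)*t) ^ (((d:ℝ)+1)/((m:ℝ)+1)) :=
      Real.rpow_nonneg (by linarith) _
    have step1 := Real.rpow_le_rpow hQd0 ih (by positivity : (0:ℝ) ≤ ((d:ℝ)+2)/((d:ℝ)+1))
    refine le_trans step1 ?_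
    have := Td d (le_trans hm hmd) hx1
    rw [hxpow d, hxpow (d+1)] at this
    push_cast at this ⊢
    convert this using 3
    · rfl
    · push_cast; ring

lemma jensen_prod (d : ℕ) (hd : 1 ≤ d) {V : Type*} (N : Finset V) (hN : N.card = d)
    (x : V → ℝ) (hx : ∀ u ∈ N, 1 ≤ x u) :
    ∏ u ∈ N, (((d:ℝ)+1) * x u - 1) ^ ((d:ℝ))⁻¹ ≤ ((d:ℝ)+1) * ∏ u ∈ N, (x u) ^ ((d:ℝ))⁻¹ - 1 := by
  have hd0 : (0:ℝ) < d := by exact_mod_cast hd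
  set g : ℝ → ℝ := fun z => Real.log (((d:ℝ)+1) * Real.exp z - 1) with hg_def
  have hApos : ∀ z : ℝ, 0 ≤ z → (0:ℝ) < ((d:ℝ)+1) * Real.exp z - 1 := by
    intro z hz
    have : (1:ℝ) ≤ Real.exp z := Real.one_le_exp hz
    nlinarith
  have hder : ∀ z : ℝ, 0 ≤ z → HasDerivAt g
      ((((d:ℝ)+1) * Real.exp z) / (((d:ℝ)+1) * Real.exp z - 1)) z := by
    intro z hz
    have h1 : HasDerivAt (fun z => ((d:ℝ)+1) * Real.exp z - 1) (((d:ℝ)+1) * Real.exp z) z :=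
      ((Real.hasDerivAt_exp z).const_mul ((d:ℝ)+1)).sub_const 1
    exact h1.log (ne_of_gt (hApos z hz))
  have hconc : ConcaveOn ℝ (Set.Ici (0:ℝ)) g := by
    apply AntitoneOn.concaveOn_of_deriv (convex_Ici 0)
    · exact fun z hz => ((hder z hz).differentiableAt.continuousAt).continuousWithinAt
    · rw [interior_Ici]
      exact fun z hz => ((hder z (le_of_lt hz)).differentiableAt).differentiableWithinAt
    · rw [interior_Ici]
      intro z₁ hz₁ z₂ hz₂ h12
      rw [(hder z₁ (le_of_lt hz₁)).deriv, (hder z₂ (le_of_lt hz₂)).deriv]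
      have hA1 : (1:ℝ) < ((d:ℝ)+1) * Real.exp z₁ := by
        have := Real.one_le_exp (le_of_lt hz₁); nlinarith
      have hA2 : (1:ℝ) < ((d:ℝ)+1) * Real.exp z₂ := by
        have := Real.one_le_exp (le_of_lt hz₂); nlinarith
      have hle : ((d:ℝ)+1) * Real.exp z₁ ≤ ((d:ℝ)+1) * Real.exp z₂ :=
        mul_le_mul_of_nonneg_left (Real.exp_le_exp.2 h12) (by positivity)
      rw [div_le_div_iff₀ (by linarith) (by linarith)]
      nlinarith
  -- Jensen
  have hw1 : ∑ _u ∈ N, ((d:ℝ))⁻¹ = 1 := by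
    rw [Finset.sum_const, hN, nsmul_eq_mul]; field_simp
  have hjen := hconc.le_map_sum (t := N) (w := fun _ => ((d:ℝ))⁻¹)
    (p := fun u => Real.log (x u)) (fun u _ => by positivity) hw1
    (fun u hu => Set.mem_Ici.2 (Real.log_nonneg (hx u hu)))
  simp only [smul_eq_mul] at hjen
  -- rewrite both sides
  have hxpos : ∀ u ∈ N, (0:ℝ) < x u := fun u hu => lt_of_lt_of_le one_pos (hx u hu)
  have hgp : ∀ u ∈ N, g (Real.log (x u)) = Real.log (((d:ℝ)+1) * x u - 1) := by
    intro u hu; rw [hg_def]; simp only; rw [Real.exp_log (hxpos u hu)]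
  have hLHS : Real.exp (∑ u ∈ N, ((d:ℝ))⁻¹ * g (Real.log (x u)))
      = ∏ u ∈ N, (((d:ℝ)+1) * x u - 1) ^ ((d:ℝ))⁻¹ := by
    rw [Real.exp_sum]
    apply Finset.prod_congr rfl
    intro u hu
    rw [hgp u hu, mul_comm, Real.exp_mul, Real.exp_log]
    have := hx u hu; nlinarith
  have hexp_mean : Real.exp (∑ u ∈ N, ((d:ℝ))⁻¹ * Real.log (x u))
      = ∏ u ∈ N, (x u) ^ ((d:ℝ))⁻¹ := by
    rw [Real.exp_sum]
    apply Finset.prod_congr rfl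
    intro u hu
    rw [mul_comm, Real.exp_mul, Real.exp_log (hxpos u hu)]
  have hmean_mem : (0:ℝ) ≤ ∑ u ∈ N, ((d:ℝ))⁻¹ * Real.log (x u) := by
    apply Finset.sum_nonneg
    intro u hu
    exact mul_nonneg (by positivity) (Real.log_nonneg (hx u hu))
  have hRHS : Real.exp (g (∑ u ∈ N, ((d:ℝ))⁻¹ * Real.log (x u)))
      = ((d:ℝ)+1) * ∏ u ∈ N, (x u) ^ ((d:ℝ))⁻¹ - 1 := by
    rw [hg_def]
    simp only
    rw [Real.exp_log (hApos _ hmean_mem), hexp_mean]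
  calc ∏ u ∈ N, (((d:ℝ)+1) * x u - 1) ^ ((d:ℝ))⁻¹
      = Real.exp (∑ u ∈ N, ((d:ℝ))⁻¹ * g (Real.log (x u))) := hLHS.symm
    _ ≤ Real.exp (g (∑ u ∈ N, ((d:ℝ))⁻¹ * Real.log (x u))) := Real.exp_le_exp.2 hjen
    _ = ((d:ℝ)+1) * ∏ u ∈ N, (x u) ^ ((d:ℝ))⁻¹ - 1 := hRHS

lemma key_ineq (d : ℕ) (hd : 1 ≤ d) {V : Type*} (N : Finset V) (hN : N.card = d)
    (m : V → ℕ) (hm1 : ∀ u ∈ N, 1 ≤ m u) (hmd : ∀ u ∈ N, m u ≤ d)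
    (t : V → ℝ) (ht : ∀ u ∈ N, 0 ≤ t u) (s : ℝ) (hs : 0 ≤ s) :
    (1 + ((d:ℝ)+1)*s) ^ (((d:ℝ)+1))⁻¹ * ∏ u ∈ N, (1 + ((m u:ℝ)+1) * t u) ^ (((m u:ℝ)+1))⁻¹
      ≤ ∏ u ∈ N, (1 + (m u:ℝ) * t u) ^ ((m u:ℝ))⁻¹ + s := by
  have hd0 : (0:ℝ) < d := by exact_mod_cast hd
  have hdne : ((d:ℝ)) ≠ 0 := ne_of_gt hd0
  have hd1ne : ((d:ℝ)+1) ≠ 0 := by positivity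
  set Q : ℝ := ∏ u ∈ N, (1 + ((m u:ℝ)+1) * t u) ^ (((m u:ℝ)+1))⁻¹ with hQ_def
  set P : ℝ := ∏ u ∈ N, (1 + (m u:ℝ) * t u) ^ ((m u:ℝ))⁻¹ with hP_def
  have hfac1 : ∀ u ∈ N, (1:ℝ) ≤ (1 + ((m u:ℝ)+1) * t u) ^ (((m u:ℝ)+1))⁻¹ := by
    intro u hu
    apply Real.one_le_rpow _ (by positivity)
    nlinarith [ht u hu, (by exact_mod_cast hm1 u hu : (1:ℝ) ≤ (m u:ℝ))]
  have hfacP : ∀ u ∈ N, (1:ℝ) ≤ (1 + (m u:ℝ) * t u) ^ ((m u:ℝ))⁻¹ := by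
    intro u hu
    apply Real.one_le_rpow _ (by positivity)
    nlinarith [ht u hu, (by exact_mod_cast hm1 u hu : (1:ℝ) ≤ (m u:ℝ))]
  have hQ1 : (1:ℝ) ≤ Q := by
    have := Finset.prod_le_prod (f := fun _ => (1:ℝ)) (g := fun u => (1 + ((m u:ℝ)+1) * t u) ^ (((m u:ℝ)+1))⁻¹) (fun u hu => zero_le_one) hfac1
    simpa using this
  have hP1 : (1:ℝ) ≤ P := by
    have := Finset.prod_le_prod (f := fun _ => (1:ℝ)) (g := fun u => (1 + (m u:ℝ) * t u) ^ ((m u:ℝ))⁻¹) (fun u hu => zero_le_one) hfacP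
    simpa using this
  set Y : ℝ := Q ^ (((d:ℝ)+1)/(d:ℝ)) with hY_def
  have hY0 : (0:ℝ) ≤ Y := Real.rpow_nonneg (by linarith) _
  -- Step A: two-point AM-GM
  have hA : (1 + ((d:ℝ)+1)*s) ^ (((d:ℝ)+1))⁻¹ * Q ≤ s + (1 + (d:ℝ)*Y)/((d:ℝ)+1) := by
    have hQY : Q = Y ^ ((d:ℝ)/((d:ℝ)+1)) := by
      rw [hY_def, ← Real.rpow_mul (by linarith)]
      rw [show ((d:ℝ)+1)/(d:ℝ) * ((d:ℝ)/((d:ℝ)+1)) = 1 by field_simp]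
      rw [Real.rpow_one]
    have amgm := Real.geom_mean_le_arith_mean2_weighted
      (w₁ := (((d:ℝ)+1))⁻¹) (w₂ := (d:ℝ)/((d:ℝ)+1))
      (p₁ := 1 + ((d:ℝ)+1)*s) (p₂ := Y)
      (by positivity) (by positivity) (by nlinarith) hY0 (by field_simp; ring)
    rw [← hQY] at amgm
    calc (1 + ((d:ℝ)+1)*s) ^ (((d:ℝ)+1))⁻¹ * Q
        ≤ (((d:ℝ)+1))⁻¹ * (1 + ((d:ℝ)+1)*s) + (d:ℝ)/((d:ℝ)+1) * Y := amgm
      _ = s + (1 + (d:ℝ)*Y)/((d:ℝ)+1) := by field_simp; ring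
  -- Step B: Y ≤ ((d+1) P - 1)/d
  have hB : Y ≤ (((d:ℝ)+1) * P - 1)/(d:ℝ) := by
    have hYprod : Y = ∏ u ∈ N, ((1 + ((m u:ℝ)+1) * t u) ^ (((d:ℝ)+1)/((m u:ℝ)+1))) ^ ((d:ℝ))⁻¹ := by
      rw [hY_def, hQ_def, ← Real.finset_prod_rpow N _
        (fun u hu => Real.rpow_nonneg (by nlinarith [mul_nonneg (by positivity : (0:ℝ) ≤ (m u:ℝ)+1) (ht u hu)]) _) _]
      apply Finset.prod_congr rfl
      intro u hu
      have hb : (0:ℝ) ≤ 1 + ((m u:ℝ)+1) * t u := by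
        nlinarith [mul_nonneg (by positivity : (0:ℝ) ≤ (m u:ℝ)+1) (ht u hu)]
      rw [← Real.rpow_mul hb, ← Real.rpow_mul hb]
      congr 1
      field_simp
    set x : V → ℝ := fun u => (1 + (m u:ℝ) * t u) ^ ((d:ℝ)/(m u:ℝ)) with hx_def
    have hx1 : ∀ u ∈ N, (1:ℝ) ≤ x u := by
      intro u hu
      apply Real.one_le_rpow _ (by positivity)
      nlinarith [ht u hu, (by exact_mod_cast hm1 u hu : (1:ℝ) ≤ (m u:ℝ))]
    have hstep : ∀ u ∈ N, ((1 + ((m u:ℝ)+1) * t u) ^ (((d:ℝ)+1)/((m u:ℝ)+1))) ^ ((d:ℝ))⁻¹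
        ≤ ((((d:ℝ)+1) * x u - 1)/(d:ℝ)) ^ ((d:ℝ))⁻¹ := by
      intro u hu
      apply Real.rpow_le_rpow (Real.rpow_nonneg (by nlinarith [ht u hu, (by positivity : (0:ℝ) ≤ (m u:ℝ))]) _)
        _ (by positivity)
      exact chain (m u) (hm1 u hu) (ht u hu) d (hmd u hu)
    have hprodle : Y ≤ ∏ u ∈ N, ((((d:ℝ)+1) * x u - 1)/(d:ℝ)) ^ ((d:ℝ))⁻¹ := by
      rw [hYprod]
      apply Finset.prod_le_prod
      · intro u hu
        exact Real.rpow_nonneg (Real.rpow_nonneg (by nlinarith [ht u hu, (by positivity : (0:ℝ) ≤ (m u:ℝ))]) _) _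
      · exact hstep
    have hsplit : ∏ u ∈ N, ((((d:ℝ)+1) * x u - 1)/(d:ℝ)) ^ ((d:ℝ))⁻¹
        = (∏ u ∈ N, (((d:ℝ)+1) * x u - 1) ^ ((d:ℝ))⁻¹) / (d:ℝ) := by
      have : ∀ u ∈ N, ((((d:ℝ)+1) * x u - 1)/(d:ℝ)) ^ ((d:ℝ))⁻¹
          = (((d:ℝ)+1) * x u - 1) ^ ((d:ℝ))⁻¹ / ((d:ℝ) ^ ((d:ℝ))⁻¹) := by
        intro u hu
        exact Real.div_rpow (by nlinarith [hx1 u hu]) (le_of_lt hd0) _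
      rw [Finset.prod_congr rfl this, Finset.prod_div_distrib]
      congr 1
      rw [Finset.prod_const, hN, ← Real.rpow_natCast ((d:ℝ) ^ ((d:ℝ))⁻¹) d, ← Real.rpow_mul (le_of_lt hd0)]
      field_simp
      simp
    have hjens := jensen_prod d hd N hN x hx1
    have hPx : ∏ u ∈ N, (x u) ^ ((d:ℝ))⁻¹ = P := by
      rw [hP_def]
      apply Finset.prod_congr rfl
      intro u hu
      rw [hx_def]
      simp only
      rw [← Real.rpow_mul (by nlinarith [ht u hu, (by positivity : (0:ℝ) ≤ (m u:ℝ))])]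
      congr 1
      have hmne : ((m u:ℝ)) ≠ 0 := by
        have := hm1 u hu; positivity
      field_simp
    rw [hPx] at hjens
    calc Y ≤ ∏ u ∈ N, ((((d:ℝ)+1) * x u - 1)/(d:ℝ)) ^ ((d:ℝ))⁻¹ := hprodle
      _ = (∏ u ∈ N, (((d:ℝ)+1) * x u - 1) ^ ((d:ℝ))⁻¹) / (d:ℝ) := hsplit
      _ ≤ (((d:ℝ)+1) * P - 1)/(d:ℝ) := by
          gcongr
  calc (1 + ((d:ℝ)+1)*s) ^ (((d:ℝ)+1))⁻¹ * Q ≤ s + (1 + (d:ℝ)*Y)/((d:ℝ)+1) := hA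
    _ ≤ s + (1 + (d:ℝ)*((((d:ℝ)+1) * P - 1)/(d:ℝ)))/((d:ℝ)+1) := by
        have : (d:ℝ)*Y ≤ (d:ℝ)*((((d:ℝ)+1) * P - 1)/(d:ℝ)) :=
          mul_le_mul_of_nonneg_left hB (le_of_lt hd0)
        have h2 : (1 + (d:ℝ)*Y)/((d:ℝ)+1) ≤ (1 + (d:ℝ)*((((d:ℝ)+1) * P - 1)/(d:ℝ)))/((d:ℝ)+1) := by
          apply div_le_div_of_nonneg_right _ (by positivity)
          linarith
        linarith
    _ = P + s := by field_simp; ring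

end Analytic

section Graph
variable {n : ℕ}

def delV (G : SimpleGraph (Fin n)) (v : Fin n) : SimpleGraph (Fin n) where
  Adj a b := G.Adj a b ∧ a ≠ v ∧ b ≠ v
  symm := ⟨fun a b h => ⟨h.1.symm, h.2.2, h.2.1⟩⟩
  loopless := ⟨fun a h => G.loopless.irrefl a h.1⟩

instance (G : SimpleGraph (Fin n)) [DecidableRel G.Adj] (v : Fin n) :
    DecidableRel (delV G v).Adj := fun _ _ => instDecidableAnd

lemma delV_adj {G : SimpleGraph (Fin n)} {v a b : Fin n} :
    (delV G v).Adj a b ↔ G.Adj a b ∧ a ≠ v ∧ b ≠ v := Iff.rfl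

lemma delV_le {G : SimpleGraph (Fin n)} {v : Fin n} : delV G v ≤ G := fun _ _ h => h.1

lemma delV_nbr {G : SimpleGraph (Fin n)} [DecidableRel G.Adj] {v u : Fin n} :
    (delV G v).neighborFinset u = if u = v then ∅ else (G.neighborFinset u).erase v := by
  ext w
  by_cases hu : u = v
  · subst hu
    simp [SimpleGraph.mem_neighborFinset, delV_adj]
  · rw [if_neg hu]
    rw [SimpleGraph.mem_neighborFinset, Finset.mem_erase, SimpleGraph.mem_neighborFinset,
      delV_adj]
    constructor
    · rintro ⟨h, _, hw⟩; exact ⟨hw, h⟩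
    · rintro ⟨hw, h⟩; exact ⟨h, hu, hw⟩

lemma delV_degree_self {G : SimpleGraph (Fin n)} [DecidableRel G.Adj] {v : Fin n} :
    (delV G v).degree v = 0 := by
  rw [← SimpleGraph.card_neighborFinset_eq_degree, delV_nbr]
  simp

lemma delV_degree_adj {G : SimpleGraph (Fin n)} [DecidableRel G.Adj] {v u : Fin n}
    (h : G.Adj v u) : (delV G v).degree u = G.degree u - 1 := by
  have hu : u ≠ v := fun he => G.loopless.irrefl v (he ▸ h)
  rw [← SimpleGraph.card_neighborFinset_eq_degree, delV_nbr, if_neg hu,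
    Finset.card_erase_of_mem (by rw [SimpleGraph.mem_neighborFinset]; exact h.symm),
    SimpleGraph.card_neighborFinset_eq_degree]

lemma delV_degree_nadj {G : SimpleGraph (Fin n)} [DecidableRel G.Adj] {v u : Fin n}
    (hu : u ≠ v) (h : ¬ G.Adj v u) : (delV G v).degree u = G.degree u := by
  rw [← SimpleGraph.card_neighborFinset_eq_degree, delV_nbr, if_neg hu,
    Finset.erase_eq_of_notMem (by rw [SimpleGraph.mem_neighborFinset]; exact fun hh => h hh.symm),
    SimpleGraph.card_neighborFinset_eq_degree]

lemma delV_card_lt {G : SimpleGraph (Fin n)} [DecidableRel G.Adj] {v : Fin n}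
    (h : 0 < G.degree v) : (delV G v).edgeFinset.card < G.edgeFinset.card := by
  apply Finset.card_lt_card
  rw [Finset.ssubset_iff_of_subset (SimpleGraph.edgeFinset_subset_edgeFinset.2 delV_le)]
  obtain ⟨w, hw⟩ := Finset.card_pos.1
    (by rwa [G.card_neighborFinset_eq_degree v] : 0 < (G.neighborFinset v).card)
  rw [SimpleGraph.mem_neighborFinset] at hw
  refine ⟨s(v, w), ?_, ?_⟩
  · rw [SimpleGraph.mem_edgeFinset]; exact hw
  · rw [SimpleGraph.mem_edgeFinset]; exact fun hc => hc.2.1 rfl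

lemma sym2_eq_of_mem {u w : Fin n} {e : Sym2 (Fin n)} (hu : u ∈ e) (hw : w ∈ e)
    (hne : u ≠ w) : e = s(u, w) := by
  induction e with
  | _ a b =>
    rw [Sym2.mem_iff] at hu hw
    rcases hu with rfl | rfl <;> rcases hw with rfl | rfl
    · exact absurd rfl hne
    · rfl
    · exact Sym2.eq_swap
    · exact absurd rfl hne

lemma bd_eq_sum_deg (G : SimpleGraph (Fin n)) [DecidableRel G.Adj] (I : Finset (Fin n))
    (hI : ∀ u ∈ I, ∀ w ∈ I, ¬ G.Adj u w) :
    (G.edgeFinset.filter (fun e => ∃ u w, e = s(u, w) ∧ u ∈ I ∧ w ∉ I)).card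
      = ∑ u ∈ I, G.degree u := by
  have hbi : G.edgeFinset.filter (fun e => ∃ u w, e = s(u, w) ∧ u ∈ I ∧ w ∉ I)
      = I.biUnion (fun u => G.incidenceFinset u) := by
    ext e
    simp only [Finset.mem_filter, Finset.mem_biUnion, SimpleGraph.mem_incidenceFinset]
    constructor
    · rintro ⟨he, u, w, rfl, hu, hw⟩
      refine ⟨u, hu, ⟨?_, Sym2.mem_mk_left u w⟩⟩
      rw [SimpleGraph.mem_edgeFinset] at he
      exact he
    · rintro ⟨u, hu, he, hue⟩
      have hadj : e ∈ G.edgeFinset := by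
        rw [SimpleGraph.mem_edgeFinset]; exact he
      refine ⟨hadj, ?_⟩
      induction e with
      | _ a b =>
        have hab : G.Adj a b := (G.mem_edgeSet).1 he
        rw [Sym2.mem_iff] at hue
        rcases hue with rfl | rfl
        · refine ⟨u, b, rfl, hu, fun hb => hI u hu b hb hab⟩
        · refine ⟨u, a, Sym2.eq_swap, hu, fun ha => hI u hu a ha hab.symm⟩
  rw [hbi, Finset.card_biUnion]
  · exact Finset.sum_congr rfl fun u _ => G.card_incidenceFinset_eq_degree u
  · intro u hu w hw huw
    simp only [Finset.disjoint_left]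
    intro e heu hew
    rw [SimpleGraph.mem_incidenceFinset] at heu hew
    have he : e = s(u, w) := sym2_eq_of_mem heu.2 hew.2 huw
    exact hI u hu w hw ((G.mem_edgeSet).1 (he ▸ heu.1))

lemma decomp (G : SimpleGraph (Fin n)) [DecidableRel G.Adj] (v : Fin n) (μ : Fin n → ℝ) :
    ∑ I ∈ Finset.univ.filter (fun I : Finset (Fin n) => ∀ u ∈ I, ∀ w ∈ I, ¬ G.Adj u w),
        ∏ u ∈ I, μ u
    = (∑ I ∈ Finset.univ.filter
          (fun I : Finset (Fin n) => ∀ u ∈ I, ∀ w ∈ I, ¬ (delV G v).Adj u w),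
        ∏ u ∈ I, (Function.update μ v 0) u)
      + μ v * ∑ I ∈ Finset.univ.filter
          (fun I : Finset (Fin n) => ∀ u ∈ I, ∀ w ∈ I, ¬ (delV G v).Adj u w),
        ∏ u ∈ I, (fun u => if u = v ∨ G.Adj v u then 0 else μ u) u := by
  classical
  -- Part A
  have hA : (∑ I ∈ Finset.univ.filter
        (fun I : Finset (Fin n) => ∀ u ∈ I, ∀ w ∈ I, ¬ (delV G v).Adj u w),
      ∏ u ∈ I, (Function.update μ v 0) u)
      = ∑ I ∈ Finset.univ.filter
          (fun I : Finset (Fin n) => (∀ u ∈ I, ∀ w ∈ I, ¬ G.Adj u w) ∧ v ∉ I),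
        ∏ u ∈ I, μ u := by
    rw [← Finset.sum_filter_add_sum_filter_not _ (fun I => v ∉ I)]
    have hzero : ∑ I ∈ (Finset.univ.filter
        (fun I : Finset (Fin n) => ∀ u ∈ I, ∀ w ∈ I, ¬ (delV G v).Adj u w)).filter
          (fun I => ¬ v ∉ I),
        ∏ u ∈ I, (Function.update μ v 0) u = 0 := by
      apply Finset.sum_eq_zero
      intro I hI
      rw [Finset.mem_filter] at hI
      exact Finset.prod_eq_zero (not_not.1 hI.2) (Function.update_self v 0 μ)
    rw [hzero, add_zero, Finset.filter_filter]
    rw [show (Finset.univ.filter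
        (fun I : Finset (Fin n) => (∀ u ∈ I, ∀ w ∈ I, ¬ G.Adj u w) ∧ v ∉ I))
      = (Finset.univ.filter
        (fun I : Finset (Fin n) => (∀ u ∈ I, ∀ w ∈ I, ¬ (delV G v).Adj u w) ∧ v ∉ I)) from ?_]
    · apply Finset.sum_congr rfl
      intro I hI
      rw [Finset.mem_filter] at hI
      apply Finset.prod_congr rfl
      intro u hu
      exact Function.update_of_ne (fun he => hI.2.2 (by rwa [he] at hu)) 0 μ
    · apply Finset.filter_congr
      intro I _
      simp only [and_congr_left_iff]
      intro hvI
      constructor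
      · intro h u hu w hw hadj
        exact h u hu w hw hadj.1
      · intro h u hu w hw hadj
        exact h u hu w hw ⟨hadj, fun he => hvI (he ▸ hu), fun he => hvI (he ▸ hw)⟩
  -- Part B
  have hB : μ v * ∑ I ∈ Finset.univ.filter
        (fun I : Finset (Fin n) => ∀ u ∈ I, ∀ w ∈ I, ¬ (delV G v).Adj u w),
      ∏ u ∈ I, (fun u => if u = v ∨ G.Adj v u then 0 else μ u) u
      = ∑ I ∈ Finset.univ.filter
          (fun I : Finset (Fin n) => (∀ u ∈ I, ∀ w ∈ I, ¬ G.Adj u w) ∧ v ∈ I),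
        ∏ u ∈ I, μ u := by
    rw [Finset.mul_sum]
    rw [← Finset.sum_filter_add_sum_filter_not
      (Finset.univ.filter (fun I : Finset (Fin n) => ∀ u ∈ I, ∀ w ∈ I, ¬ (delV G v).Adj u w))
      (fun I => v ∉ I ∧ ∀ u ∈ I, ¬ G.Adj v u)]
    have hzero : ∑ I ∈ (Finset.univ.filter
        (fun I : Finset (Fin n) => ∀ u ∈ I, ∀ w ∈ I, ¬ (delV G v).Adj u w)).filter
          (fun I => ¬ (v ∉ I ∧ ∀ u ∈ I, ¬ G.Adj v u)),
        μ v * ∏ u ∈ I, (fun u => if u = v ∨ G.Adj v u then 0 else μ u) u = 0 := by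
      apply Finset.sum_eq_zero
      intro I hI
      rw [Finset.mem_filter, not_and_or, not_not] at hI
      rcases hI.2 with hv | hadj
      · rw [Finset.prod_eq_zero hv (by simp : (if v = v ∨ G.Adj v v then (0:ℝ) else μ v) = 0),
          mul_zero]
      · push_neg at hadj
        obtain ⟨u, hu, hadj⟩ := hadj
        rw [Finset.prod_eq_zero hu (by simp [hadj] : (if u = v ∨ G.Adj v u then (0:ℝ) else μ u) = 0),
          mul_zero]
    rw [hzero, add_zero, Finset.filter_filter]
    -- bijection: J ↦ insert v J
    apply Finset.sum_nbij' (fun J => insert v J) (fun I => I.erase v)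
    · intro J hJ
      rw [Finset.mem_filter] at hJ ⊢
      obtain ⟨-, hindep, hvJ, hnadj⟩ := hJ
      refine ⟨Finset.mem_univ _, ?_, Finset.mem_insert_self v J⟩
      intro u hu w hw
      rcases Finset.mem_insert.1 hu with rfl | hu' <;> rcases Finset.mem_insert.1 hw with rfl | hw'
      · exact G.loopless.irrefl _
      · exact hnadj w hw'
      · exact fun h => hnadj u hu' h.symm
      · intro h
        exact hindep u hu' w hw' ⟨h, fun he => hvJ (he ▸ hu'), fun he => hvJ (he ▸ hw')⟩
    · intro I hI
      rw [Finset.mem_filter] at hI ⊢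
      obtain ⟨-, hindep, hvI⟩ := hI
      refine ⟨Finset.mem_univ _, ?_, Finset.notMem_erase v I, ?_⟩
      · intro u hu w hw hadj
        exact hindep u (Finset.mem_of_mem_erase hu) w (Finset.mem_of_mem_erase hw) hadj.1
      · intro u hu
        exact hindep v hvI u (Finset.mem_of_mem_erase hu)
    · intro J hJ
      rw [Finset.mem_filter] at hJ
      exact Finset.erase_insert hJ.2.2.1
    · intro I hI
      rw [Finset.mem_filter] at hI
      exact Finset.insert_erase hI.2.2
    · intro J hJ
      rw [Finset.mem_filter] at hJ
      obtain ⟨-, hindep, hvJ, hnadj⟩ := hJ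
      rw [Finset.prod_insert hvJ]
      congr 1
      apply Finset.prod_congr rfl
      intro u hu
      simp only
      rw [if_neg]
      push_neg
      exact ⟨fun he => hvJ (he ▸ hu), fun h => hnadj u hu h⟩
  rw [hA, hB]
  rw [← Finset.sum_filter_add_sum_filter_not
    (Finset.univ.filter (fun I : Finset (Fin n) => ∀ u ∈ I, ∀ w ∈ I, ¬ G.Adj u w))
    (fun I => v ∉ I), Finset.filter_filter, Finset.filter_filter]
  congr 1
  apply Finset.sum_congr _ (fun _ _ => rfl)
  apply Finset.filter_congr
  intro I _
  simp [not_not]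

end Graph
section Main
variable {n : ℕ}

lemma base_case (G : SimpleGraph (Fin n)) [DecidableRel G.Adj]
    (hG : G.edgeFinset.card = 0) (μ : Fin n → ℝ) :
    ∏ v, (((G.degree v : ℝ) + 1) * μ v + 1) ^ ((1 : ℝ) / ((G.degree v : ℝ) + 1))
      = ∑ I ∈ Finset.univ.filter
          (fun I : Finset (Fin n) => ∀ u ∈ I, ∀ w ∈ I, ¬ G.Adj u w),
        ∏ u ∈ I, μ u := by
  have hE : G.edgeFinset = ∅ := Finset.card_eq_zero.1 hG
  have hAdj : ∀ a b : Fin n, ¬ G.Adj a b := by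
    intro a b hab
    have : s(a, b) ∈ G.edgeFinset := SimpleGraph.mem_edgeFinset.2 hab
    rw [hE] at this
    exact absurd this (Finset.notMem_empty _)
  have hdeg : ∀ v, G.degree v = 0 := by
    intro v
    rw [← SimpleGraph.card_neighborFinset_eq_degree, Finset.card_eq_zero]
    ext w
    simp only [SimpleGraph.mem_neighborFinset, Finset.notMem_empty, iff_false]
    exact hAdj v w
  have hfilter : Finset.univ.filter
      (fun I : Finset (Fin n) => ∀ u ∈ I, ∀ w ∈ I, ¬ G.Adj u w) = Finset.univ := by
    apply Finset.filter_true_of_mem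
    intro I _ u _ w _
    exact hAdj u w
  rw [hfilter]
  have hL : ∏ v, (((G.degree v : ℝ) + 1) * μ v + 1) ^ ((1 : ℝ) / ((G.degree v : ℝ) + 1))
      = ∏ v, (μ v + 1) := by
    apply Finset.prod_congr rfl
    intro v _
    rw [hdeg v]
    norm_num
  rw [hL, Finset.prod_add]
  rw [Finset.powerset_univ]
  apply Finset.sum_congr rfl
  intro I _
  simp

set_option maxHeartbeats 1000000 in
theorem gen : ∀ (k : ℕ) (G : SimpleGraph (Fin n)) (inst : DecidableRel G.Adj),
    G.edgeFinset.card ≤ k → ∀ μ : Fin n → ℝ, (∀ u, 0 ≤ μ u) →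
    ∏ v, (((G.degree v : ℝ) + 1) * μ v + 1) ^ ((1 : ℝ) / ((G.degree v : ℝ) + 1))
      ≤ ∑ I ∈ Finset.univ.filter
          (fun I : Finset (Fin n) => ∀ u ∈ I, ∀ w ∈ I, ¬ G.Adj u w),
        ∏ u ∈ I, μ u := by
  intro k
  induction k with
  | zero =>
    intro G inst hk μ hμ
    exact le_of_eq (base_case G (Nat.le_zero.1 hk) μ)
  | succ k ih =>
    intro G inst hk μ hμ
    by_cases h0 : G.edgeFinset.card = 0
    · exact le_of_eq (base_case G h0 μ)
    · -- pick max degree vertex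
      obtain ⟨e, he⟩ := Finset.card_pos.1 (Nat.pos_of_ne_zero h0)
      have hne : (Finset.univ : Finset (Fin n)).Nonempty := by
        induction e with
        | _ a b => exact ⟨a, Finset.mem_univ a⟩
      obtain ⟨v, -, hmax⟩ := (Finset.univ : Finset (Fin n)).exists_max_image (fun u => G.degree u) hne
      have hd1 : 1 ≤ G.degree v := by
        induction e with
        | _ a b =>
          have hab : G.Adj a b := SimpleGraph.mem_edgeFinset.1 he
          have : 1 ≤ G.degree a := by
            rw [← SimpleGraph.card_neighborFinset_eq_degree]
            exact Finset.card_pos.2 ⟨b, (SimpleGraph.mem_neighborFinset G a b).2 hab⟩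
          exact le_trans this (hmax a (Finset.mem_univ a))
      have hdpos : 0 < G.degree v := hd1
      set G' := delV G v with hG'_def
      have hcard : G'.edgeFinset.card ≤ k := by
        have h := delV_card_lt (G := G) (v := v) hdpos
        exact Nat.lt_succ_iff.mp (lt_of_lt_of_le h hk)
      set μA : Fin n → ℝ := Function.update μ v 0 with hμA_def
      set μB : Fin n → ℝ := fun u => if u = v ∨ G.Adj v u then 0 else μ u with hμB_def
      have hμA : ∀ u, 0 ≤ μA u := by
        intro u
        rw [hμA_def]
        by_cases hu : u = v
        · subst hu; rw [Function.update_self]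
        · rw [Function.update_of_ne hu]; exact hμ u
      have hμB : ∀ u, 0 ≤ μB u := by
        intro u
        rw [hμB_def]
        simp only
        by_cases hu : u = v ∨ G.Adj v u
        · rw [if_pos hu]
        · rw [if_neg hu]; exact hμ u
      have hIHA := ih G' inferInstance hcard μA hμA
      have hIHB := ih G' inferInstance hcard μB hμB
      have hdec := decomp G v μ
      -- notation
      set Nv := G.neighborFinset v with hNv_def
      have hvNv : v ∉ Nv := by
        rw [hNv_def, SimpleGraph.mem_neighborFinset]
        exact G.loopless.irrefl v
      set s0 : Finset (Fin n) := insert v Nv with hs0_def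
      set F : Fin n → ℝ := fun w =>
        (((G.degree w : ℝ) + 1) * μ w + 1) ^ ((1 : ℝ) / ((G.degree w : ℝ) + 1)) with hF_def
      set FA : Fin n → ℝ := fun w =>
        (((G'.degree w : ℝ) + 1) * μA w + 1) ^ ((1 : ℝ) / ((G'.degree w : ℝ) + 1)) with hFA_def
      set FB : Fin n → ℝ := fun w =>
        (((G'.degree w : ℝ) + 1) * μB w + 1) ^ ((1 : ℝ) / ((G'.degree w : ℝ) + 1)) with hFB_def
      set pA : Fin n → ℝ := fun w =>
        ((G.degree w : ℝ) * μ w + 1) ^ ((1 : ℝ) / (G.degree w : ℝ)) with hpA_def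
      set C : ℝ := ∏ w ∈ s0ᶜ, F w with hC_def
      -- facts about members of Nv
      have hNvdeg : ∀ w ∈ Nv, 1 ≤ G.degree w := by
        intro w hw
        rw [hNv_def, SimpleGraph.mem_neighborFinset] at hw
        rw [← SimpleGraph.card_neighborFinset_eq_degree]
        exact Finset.card_pos.2 ⟨v, (SimpleGraph.mem_neighborFinset G w v).2 hw.symm⟩
      have hNvne : ∀ w ∈ Nv, w ≠ v := by
        intro w hw he
        exact hvNv (he ▸ hw)
      -- compl facts
      have hcompl : ∀ w ∈ s0ᶜ, w ≠ v ∧ ¬ G.Adj v w := by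
        intro w hw
        rw [Finset.mem_compl, hs0_def, Finset.mem_insert, not_or] at hw
        refine ⟨hw.1, ?_⟩
        rw [hNv_def, SimpleGraph.mem_neighborFinset] at hw
        exact hw.2
      -- product computations
      have hprod_split : ∀ f : Fin n → ℝ,
          ∏ w, f w = (f v * ∏ w ∈ Nv, f w) * ∏ w ∈ s0ᶜ, f w := by
        intro f
        rw [← Finset.prod_mul_prod_compl s0 f, hs0_def, Finset.prod_insert hvNv]
      have hFA_v : FA v = 1 := by
        rw [hFA_def]
        simp only
        rw [delV_degree_self, hμA_def, Function.update_self]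
        norm_num
      have hFA_N : ∀ w ∈ Nv, FA w = pA w := by
        intro w hw
        have hadj : G.Adj v w := by
          rw [hNv_def, SimpleGraph.mem_neighborFinset] at hw; exact hw
        have hdw := hNvdeg w hw
        rw [hFA_def, hpA_def]
        simp only
        rw [delV_degree_adj hadj, hμA_def, Function.update_of_ne (hNvne w hw)]
        have hcast : ((G.degree w - 1 : ℕ) : ℝ) + 1 = (G.degree w : ℝ) := by
          have : (1:ℕ) ≤ G.degree w := hdw
          push_cast [Nat.cast_sub this]
          ring
        rw [hcast]
      have hFA_c : ∀ w ∈ s0ᶜ, FA w = F w := by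
        intro w hw
        obtain ⟨hwv, hwn⟩ := hcompl w hw
        rw [hFA_def, hF_def]
        simp only
        rw [delV_degree_nadj hwv hwn, hμA_def, Function.update_of_ne hwv]
      have hFB_v : FB v = 1 := by
        rw [hFB_def]
        simp only
        rw [delV_degree_self, hμB_def]
        simp
      have hFB_N : ∀ w ∈ Nv, FB w = 1 := by
        intro w hw
        have hadj : G.Adj v w := by
          rw [hNv_def, SimpleGraph.mem_neighborFinset] at hw; exact hw
        rw [hFB_def, hμB_def]
        simp only [Or.inr hadj, if_pos]
        norm_num
      have hFB_c : ∀ w ∈ s0ᶜ, FB w = F w := by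
        intro w hw
        obtain ⟨hwv, hwn⟩ := hcompl w hw
        rw [hFB_def, hF_def, hμB_def]
        simp only
        rw [delV_degree_nadj hwv hwn, if_neg (by push_neg; exact ⟨hwv, hwn⟩)]
      have hprodFA : ∏ w, FA w = (∏ w ∈ Nv, pA w) * C := by
        rw [hprod_split FA, hFA_v, one_mul, Finset.prod_congr rfl hFA_N, hC_def,
          Finset.prod_congr rfl hFA_c]
      have hprodFB : ∏ w, FB w = C := by
        rw [hprod_split FB, hFB_v, one_mul, Finset.prod_congr rfl hFB_N, Finset.prod_const_one,
          one_mul, hC_def, Finset.prod_congr rfl hFB_c]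
      have hC0 : 0 ≤ C := by
        rw [hC_def]
        apply Finset.prod_nonneg
        intro w _
        apply Real.rpow_nonneg
        have := hμ w
        positivity
      -- key inequality
      have hkey : F v * ∏ w ∈ Nv, F w ≤ (∏ w ∈ Nv, pA w) + μ v := by
        have hNcard : Nv.card = G.degree v := G.card_neighborFinset_eq_degree v
        have hk2 := key_ineq (G.degree v) hd1 Nv hNcard (fun u => G.degree u)
          (fun u hu => hNvdeg u hu) (fun u hu => hmax u (Finset.mem_univ u))
          μ (fun u _ => hμ u) (μ v) (hμ v)
        have hFv : F v = (1 + ((G.degree v : ℝ) + 1) * μ v) ^ (((G.degree v : ℝ) + 1))⁻¹ := by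
          rw [hF_def]
          simp only
          rw [show ((G.degree v : ℝ) + 1) * μ v + 1 = 1 + ((G.degree v : ℝ) + 1) * μ v from by
            ring, one_div]
        have hFN : ∀ u ∈ Nv, F u
            = (1 + ((G.degree u : ℝ) + 1) * μ u) ^ (((G.degree u : ℝ) + 1))⁻¹ := by
          intro u _
          rw [hF_def]
          simp only
          rw [show ((G.degree u : ℝ) + 1) * μ u + 1 = 1 + ((G.degree u : ℝ) + 1) * μ u from by
            ring, one_div]
        have hpN : ∀ u ∈ Nv, pA u
            = (1 + (G.degree u : ℝ) * μ u) ^ ((G.degree u : ℝ))⁻¹ := by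
          intro u _
          rw [hpA_def]
          simp only
          rw [show (G.degree u : ℝ) * μ u + 1 = 1 + (G.degree u : ℝ) * μ u from by
            ring, one_div]
        rw [hFv, Finset.prod_congr rfl hFN, Finset.prod_congr rfl hpN]
        exact hk2
      -- assemble
      rw [hdec]
      have hNv0 : 0 ≤ ∏ w ∈ Nv, pA w := by
        apply Finset.prod_nonneg
        intro w _
        apply Real.rpow_nonneg
        have := hμ w
        positivity
      calc ∏ w, F w = (F v * ∏ w ∈ Nv, F w) * C := hprod_split F
        _ ≤ ((∏ w ∈ Nv, pA w) + μ v) * C := mul_le_mul_of_nonneg_right hkey hC0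
        _ = (∏ w ∈ Nv, pA w) * C + μ v * C := by ring
        _ = (∏ w, FA w) + μ v * (∏ w, FB w) := by rw [hprodFA, hprodFB]
        _ ≤ _ + μ v * _ := by
            apply add_le_add hIHA
            exact mul_le_mul_of_nonneg_left hIHB (hμ v)

end Main

theorem stmt_5 (n : ℕ) (G : SimpleGraph (Fin n)) [DecidableRel G.Adj]
    (lam alpha : ℝ) (hlam : 0 ≤ lam) (halpha : 0 ≤ alpha) :
    (∑ I ∈ Finset.univ.filter
        (fun I : Finset (Fin n) => ∀ u ∈ I, ∀ v ∈ I, ¬ G.Adj u v),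
      lam ^ I.card *
        alpha ^ (G.edgeFinset.filter
          (fun e => ∃ u v, e = s(u, v) ∧ u ∈ I ∧ v ∉ I)).card)
    ≥ ∏ v, (((G.degree v : ℝ) + 1) * lam * alpha ^ (G.degree v) + 1) ^
        ((1 : ℝ) / ((G.degree v : ℝ) + 1)) := by
  set μ : Fin n → ℝ := fun u => lam * alpha ^ (G.degree u) with hμ_def
  have hμ : ∀ u, 0 ≤ μ u := by
    intro u
    rw [hμ_def]
    positivity
  have hgen := gen G.edgeFinset.card G inferInstance le_rfl μ hμ
  have hsum : ∑ I ∈ Finset.univ.filter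
        (fun I : Finset (Fin n) => ∀ u ∈ I, ∀ v ∈ I, ¬ G.Adj u v),
      lam ^ I.card *
        alpha ^ (G.edgeFinset.filter
          (fun e => ∃ u v, e = s(u, v) ∧ u ∈ I ∧ v ∉ I)).card
      = ∑ I ∈ Finset.univ.filter
          (fun I : Finset (Fin n) => ∀ u ∈ I, ∀ w ∈ I, ¬ G.Adj u w),
        ∏ u ∈ I, μ u := by
    apply Finset.sum_congr rfl
    intro I hI
    rw [Finset.mem_filter] at hI
    rw [bd_eq_sum_deg G I hI.2]
    rw [hμ_def]
    rw [Finset.prod_mul_distrib, Finset.prod_const, Finset.prod_pow_eq_pow_sum]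
  rw [ge_iff_le, hsum]
  have hrhs : ∏ v, (((G.degree v : ℝ) + 1) * lam * alpha ^ (G.degree v) + 1) ^
        ((1 : ℝ) / ((G.degree v : ℝ) + 1))
      = ∏ v, (((G.degree v : ℝ) + 1) * μ v + 1) ^ ((1 : ℝ) / ((G.degree v : ℝ) + 1)) := by
    apply Finset.prod_congr rfl
    intro v _
    rw [hμ_def]
    ring_nf
  rw [hrhs]
  exact hgen
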